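/- (Iwahori decomposition of the parahoric subgroup; GL_n case of Lemma 2.16.) Fix a block function b : {1,…,n} → {1,…,r}. Let g ∈ GL_n(ℤ_p) satisfy g_{ij} ∈ pℤ_p whenever b(i) < b(j). Then there exist unique matrices ū, m, u with g = ū·m·u, where: ū is lower block unipotent over ℤ_p (ū_{ii} = 1 and ū_{ij} = 0 unless i = j or b(i) > b(j), all entries in ℤ_p); m ∈ GL_n(ℤ_p) is block diagonal (m_{ij} = 0 unless b(i) = b(j)); and u is upper block unipotent with u_{ii} = 1, u_{ij} = 0 unless i = j or b(i) < b(j), and u_{ij} ∈ pℤ_p whenever b(i) < b(j). -/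

import Mathlib

open Matrix

variable {p : ℕ} [Fact p.Prime]

section Base

lemma qp_norm_sum_le {ι : Type*} (s : Finset ι) (f : ι → ℚ_[p]) {C : ℝ} (h0 : 0 ≤ C)
    (h : ∀ i ∈ s, ‖f i‖ ≤ C) : ‖∑ i ∈ s, f i‖ ≤ C :=
  IsUltrametricDist.norm_sum_le_of_forall_le_of_nonneg h0 h

lemma qp_norm_sub_le_max (x y : ℚ_[p]) : ‖x - y‖ ≤ max ‖x‖ ‖y‖ := by
  rw [sub_eq_add_neg]
  exact (IsUltrametricDist.norm_add_le_max _ _).trans (by rw [norm_neg])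

lemma qp_norm_prod_sub_prod {ι : Type*} (s : Finset ι) (f g : ι → ℚ_[p]) {ε : ℝ} (hε : 0 ≤ ε)
    (hf : ∀ i, ‖f i‖ ≤ 1) (hg : ∀ i, ‖g i‖ ≤ 1) (hd : ∀ i, ‖f i - g i‖ ≤ ε) :
    ‖∏ i ∈ s, f i - ∏ i ∈ s, g i‖ ≤ ε := by
  induction s using Finset.cons_induction with
  | empty => simpa using hε
  | cons a s ha IH =>
    rw [Finset.prod_cons, Finset.prod_cons]
    have key : f a * ∏ i ∈ s, f i - g a * ∏ i ∈ s, g i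
        = f a * (∏ i ∈ s, f i - ∏ i ∈ s, g i) + (f a - g a) * ∏ i ∈ s, g i := by ring
    rw [key]
    refine (IsUltrametricDist.norm_add_le_max _ _).trans (max_le ?_ ?_)
    · rw [norm_mul]
      calc ‖f a‖ * ‖∏ i ∈ s, f i - ∏ i ∈ s, g i‖ ≤ 1 * ε :=
            mul_le_mul (hf a) IH (norm_nonneg _) zero_le_one
        _ = ε := one_mul ε
    · rw [norm_mul]
      have hprod : ‖∏ i ∈ s, g i‖ ≤ 1 := by
        rw [norm_prod]
        exact Finset.prod_le_one (fun i _ => norm_nonneg _) (fun i _ => hg i)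
      calc ‖f a - g a‖ * ‖∏ i ∈ s, g i‖ ≤ ε * 1 :=
            mul_le_mul (hd a) hprod (norm_nonneg _) hε
        _ = ε := mul_one ε

lemma qp_norm_det_le {ι : Type*} [Fintype ι] [DecidableEq ι] (M : Matrix ι ι ℚ_[p])
    (h : ∀ i j, ‖M i j‖ ≤ 1) : ‖M.det‖ ≤ 1 := by
  rw [Matrix.det_apply]
  refine qp_norm_sum_le _ _ zero_le_one (fun σ _ => ?_)
  rcases Int.units_eq_one_or (Equiv.Perm.sign σ) with hs | hs <;>
    simp only [hs, Units.smul_def, Units.val_neg, Units.val_one, neg_smul, one_smul,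
      norm_neg] <;>
  · rw [norm_prod]
    exact Finset.prod_le_one (fun i _ => norm_nonneg _) (fun i _ => h _ _)

lemma qp_norm_det_sub_det {ι : Type*} [Fintype ι] [DecidableEq ι]
    (M N : Matrix ι ι ℚ_[p]) {ε : ℝ} (hε : 0 ≤ ε)
    (hM : ∀ i j, ‖M i j‖ ≤ 1) (hN : ∀ i j, ‖N i j‖ ≤ 1)
    (hd : ∀ i j, ‖M i j - N i j‖ ≤ ε) : ‖M.det - N.det‖ ≤ ε := by
  rw [Matrix.det_apply, Matrix.det_apply, ← Finset.sum_sub_distrib]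
  refine qp_norm_sum_le _ _ hε (fun σ _ => ?_)
  rw [← smul_sub]
  rcases Int.units_eq_one_or (Equiv.Perm.sign σ) with hs | hs <;>
    simp only [hs, Units.smul_def, Units.val_neg, Units.val_one, neg_smul, one_smul,
      norm_neg] <;>
    exact qp_norm_prod_sub_prod _ _ _ hε (fun i => hM _ _) (fun i => hN _ _) (fun i => hd _ _)

lemma qp_norm_eq_of_sub_lt {x y : ℚ_[p]} (h : ‖x - y‖ < ‖x‖) : ‖y‖ = ‖x‖ := by
  have h1 : ‖y‖ ≤ ‖x‖ := by
    have hy : y = x + (y - x) := by ring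
    calc ‖y‖ = ‖x + (y - x)‖ := by rw [← hy]
      _ ≤ max ‖x‖ ‖y - x‖ := IsUltrametricDist.norm_add_le_max _ _
      _ ≤ ‖x‖ := max_le le_rfl (by rw [norm_sub_rev]; exact le_of_lt h)
  have h2 : ‖x‖ ≤ ‖y‖ := by
    have hx : x = y + (x - y) := by ring
    have hle := calc ‖x‖ = ‖y + (x - y)‖ := by rw [← hx]
      _ ≤ max ‖y‖ ‖x - y‖ := IsUltrametricDist.norm_add_le_max _ _
    rcases max_cases ‖y‖ ‖x - y‖ with ⟨he, _⟩ | ⟨he, _⟩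
    · rwa [he] at hle
    · rw [he] at hle; exact absurd (lt_of_le_of_lt hle h) (lt_irrefl _)
  exact le_antisymm h1 h2

lemma qp_matmul_bound {ι κ μ : Type*} [Fintype κ] (M : Matrix ι κ ℚ_[p]) (N : Matrix κ μ ℚ_[p])
    {a c : ℝ} (ha : 0 ≤ a) (hc : 0 ≤ c) (hM : ∀ i j, ‖M i j‖ ≤ a) (hN : ∀ i j, ‖N i j‖ ≤ c)
    (i : ι) (j : μ) : ‖(M * N) i j‖ ≤ a * c := by
  rw [Matrix.mul_apply]
  refine qp_norm_sum_le _ _ (mul_nonneg ha hc) (fun k _ => ?_)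
  rw [norm_mul]
  exact mul_le_mul (hM i k) (hN k j) (norm_nonneg _) ha

lemma qp_one_entry_norm {κ : Type*} [DecidableEq κ] (i j : κ) :
    ‖(1 : Matrix κ κ ℚ_[p]) i j‖ ≤ 1 := by
  rw [Matrix.one_apply]; split_ifs <;> simp

end Base

section Preds

/-- generalized predicates over an arbitrary index type -/
def LBU (p : ℕ) [Fact p.Prime] {ι : Type*} {r : ℕ} (b : ι → Fin r)
    (A : Matrix ι ι ℚ_[p]) : Prop :=
  (∀ i, A i i = 1) ∧ (∀ i j, ¬(i = j ∨ b j < b i) → A i j = 0) ∧ (∀ i j, ‖A i j‖ ≤ 1)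

def BDG (p : ℕ) [Fact p.Prime] {ι : Type*} [Fintype ι] [DecidableEq ι] {r : ℕ} (b : ι → Fin r)
    (A : Matrix ι ι ℚ_[p]) : Prop :=
  (∀ i j, ‖A i j‖ ≤ 1) ∧ ‖A.det‖ = 1 ∧ (∀ i j, b i ≠ b j → A i j = 0)

def UBU (p : ℕ) [Fact p.Prime] {ι : Type*} {r : ℕ} (b : ι → Fin r)
    (A : Matrix ι ι ℚ_[p]) : Prop :=
  (∀ i, A i i = 1) ∧ (∀ i j, ¬(i = j ∨ b i < b j) → A i j = 0) ∧
    (∀ i j, b i < b j → ‖A i j‖ ≤ (p : ℝ)⁻¹)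

end Preds

theorem iwahori_aux (p : ℕ) [Fact p.Prime] (r : ℕ) :
    ∀ (ι : Type) [Fintype ι] [DecidableEq ι] (b : ι → Fin r) (g : Matrix ι ι ℚ_[p]),
      (∀ i j, ‖g i j‖ ≤ 1) → ‖g.det‖ = 1 → (∀ i j, b i < b j → ‖g i j‖ ≤ (p : ℝ)⁻¹) →
      ∃ ubar m u : Matrix ι ι ℚ_[p],
        LBU p b ubar ∧ BDG p b m ∧ UBU p b u ∧ g = ubar * m * u ∧
        ∀ ubar' m' u' : Matrix ι ι ℚ_[p],
          LBU p b ubar' → BDG p b m' → UBU p b u' →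
          g = ubar' * m' * u' → ubar' = ubar ∧ m' = m ∧ u' = u := by
  induction r with
  | zero =>
    intro ι _ _ b g hgint hgdet hgp
    have : IsEmpty ι := ⟨fun i => (b i).elim0⟩
    have hmeq : ∀ M N : Matrix ι ι ℚ_[p], M = N := fun M N => by
      ext i j; exact isEmptyElim i
    refine ⟨1, 1, 1, ⟨fun i => isEmptyElim i, fun i => isEmptyElim i, fun i => isEmptyElim i⟩,
      ⟨fun i => isEmptyElim i, by simp, fun i => isEmptyElim i⟩,
      ⟨fun i => isEmptyElim i, fun i => isEmptyElim i, fun i => isEmptyElim i⟩,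
      hmeq _ _, fun u' m' v' _ _ _ _ => ⟨hmeq _ _, hmeq _ _, hmeq _ _⟩⟩
  | succ r IH =>
    intro ι _ _ b g hgint hgdet hgp
    have hp1 : (1:ℝ) < (p:ℝ) := by
      exact_mod_cast (Fact.out : p.Prime).one_lt
    have hpinv0 : (0:ℝ) ≤ (p:ℝ)⁻¹ := by positivity
    have hpinv1 : (p:ℝ)⁻¹ < 1 := by
      rw [inv_lt_one_iff₀]; right; exact hp1
    set P : ι → Prop := fun i => b i = 0 with hPdef
    set e : {i // P i} ⊕ {i // ¬P i} ≃ ι := Equiv.sumCompl P with hedef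
    set A : Matrix {i // P i} {i // P i} ℚ_[p] := Matrix.of (fun i j => g i.1 j.1) with hAdef
    set B : Matrix {i // P i} {i // ¬P i} ℚ_[p] := Matrix.of (fun i j => g i.1 j.1) with hBdef
    set C : Matrix {i // ¬P i} {i // P i} ℚ_[p] := Matrix.of (fun i j => g i.1 j.1) with hCdef
    set D : Matrix {i // ¬P i} {i // ¬P i} ℚ_[p] := Matrix.of (fun i j => g i.1 j.1) with hDdef
    have hGb : g.submatrix e e = fromBlocks A B C D := by
      ext i j
      rcases i with i | i <;> rcases j with j | j <;>
        simp [hAdef, hBdef, hCdef, hDdef, hedef, Matrix.fromBlocks]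
    have hg : g = (fromBlocks A B C D).submatrix e.symm e.symm := by
      rw [← hGb, Matrix.submatrix_submatrix, Equiv.self_comp_symm, Matrix.submatrix_id_id]
    -- entry bounds
    have hA_int : ∀ i j, ‖A i j‖ ≤ 1 := fun i j => hgint _ _
    have hB_small : ∀ i j, ‖B i j‖ ≤ (p:ℝ)⁻¹ := by
      intro i j
      refine hgp _ _ ?_
      have hi : b i.1 = 0 := i.2
      have hj : b j.1 ≠ 0 := j.2
      rw [hi]
      exact Fin.pos_iff_ne_zero.mpr hj
    have hB_int : ∀ i j, ‖B i j‖ ≤ 1 := fun i j => hgint _ _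
    have hC_int : ∀ i j, ‖C i j‖ ≤ 1 := fun i j => hgint _ _
    have hD_int : ∀ i j, ‖D i j‖ ≤ 1 := fun i j => hgint _ _
    -- determinant of A is a unit
    have hdetG : (fromBlocks A B C D).det = g.det := by
      rw [← hGb]; exact Matrix.det_submatrix_equiv_self e g
    have hdetA : ‖A.det‖ = 1 ∧ ‖D.det‖ = 1 := by
      have hdiff : ‖(fromBlocks A B C D).det - (fromBlocks A 0 C D).det‖ ≤ (p:ℝ)⁻¹ := by
        refine qp_norm_det_sub_det _ _ hpinv0 ?_ ?_ ?_
        · intro i j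
          rcases i with i | i <;> rcases j with j | j <;>
            simp only [Matrix.fromBlocks_apply₁₁, Matrix.fromBlocks_apply₁₂,
              Matrix.fromBlocks_apply₂₁, Matrix.fromBlocks_apply₂₂] <;>
            first
              | exact hA_int i j
              | exact hB_int i j
              | exact hC_int i j
              | exact hD_int i j
        · intro i j
          rcases i with i | i <;> rcases j with j | j <;>
            simp only [Matrix.fromBlocks_apply₁₁, Matrix.fromBlocks_apply₁₂,
              Matrix.fromBlocks_apply₂₁, Matrix.fromBlocks_apply₂₂, Matrix.zero_apply] <;>
            first
              | exact hA_int i j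
              | simp
              | exact hC_int i j
              | exact hD_int i j
        · intro i j
          rcases i with i | i <;> rcases j with j | j <;>
            simp only [Matrix.fromBlocks_apply₁₁, Matrix.fromBlocks_apply₁₂,
              Matrix.fromBlocks_apply₂₁, Matrix.fromBlocks_apply₂₂, Matrix.zero_apply,
              sub_self, sub_zero, norm_zero] <;>
            first
              | exact hpinv0
              | exact hB_small i j
      have hzd : (fromBlocks A 0 C D).det = A.det * D.det := Matrix.det_fromBlocks_zero₁₂ A C D
      have hGd1 : ‖(fromBlocks A B C D).det‖ = 1 := by rw [hdetG]; exact hgdet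
      have hlt : ‖(fromBlocks A B C D).det - (fromBlocks A 0 C D).det‖
          < ‖(fromBlocks A B C D).det‖ := by
        rw [hGd1]; exact lt_of_le_of_lt hdiff hpinv1
      have hnorm1 : ‖(fromBlocks A 0 C D).det‖ = 1 := by
        rw [qp_norm_eq_of_sub_lt hlt]; exact hGd1
      rw [hzd, norm_mul] at hnorm1
      have hA1 : ‖A.det‖ ≤ 1 := qp_norm_det_le A hA_int
      have hD1 : ‖D.det‖ ≤ 1 := qp_norm_det_le D hD_int
      have hAn : (0:ℝ) ≤ ‖A.det‖ := norm_nonneg _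
      have hDn : (0:ℝ) ≤ ‖D.det‖ := norm_nonneg _
      have hAge : 1 ≤ ‖A.det‖ := by
        rw [← hnorm1]
        exact mul_le_of_le_one_right hAn hD1
      have hDge : 1 ≤ ‖D.det‖ := by
        rw [← hnorm1]
        exact mul_le_of_le_one_left hDn hA1
      exact ⟨le_antisymm hA1 hAge, le_antisymm hD1 hDge⟩
    have hdetA1 : ‖A.det‖ = 1 := hdetA.1
    have hdetAne : A.det ≠ 0 := by
      intro h; rw [h, norm_zero] at hdetA1; exact zero_ne_one hdetA1
    have hAunit : IsUnit A.det := isUnit_iff_ne_zero.mpr hdetAne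
    have hAA : A * A⁻¹ = 1 := Matrix.mul_nonsing_inv A hAunit
    have hAA' : A⁻¹ * A = 1 := Matrix.nonsing_inv_mul A hAunit
    have hAinv_int : ∀ i j, ‖A⁻¹ i j‖ ≤ 1 := by
      intro i j
      rw [Matrix.inv_def, Matrix.smul_apply, smul_eq_mul, norm_mul, Ring.inverse_eq_inv',
        norm_inv, hdetA1, inv_one, one_mul, Matrix.adjugate_apply]
      refine qp_norm_det_le _ ?_
      intro i' j'
      rw [Matrix.updateRow_apply]
      split_ifs with h
      · simp only [Pi.single_apply]
        split_ifs <;> simp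
      · exact hA_int i' j'
    set X : Matrix {i // P i} {i // ¬P i} ℚ_[p] := A⁻¹ * B with hXdef
    set Y : Matrix {i // ¬P i} {i // P i} ℚ_[p] := C * A⁻¹ with hYdef
    have hX_small : ∀ i j, ‖X i j‖ ≤ (p:ℝ)⁻¹ := by
      intro i j
      have := qp_matmul_bound A⁻¹ B zero_le_one hpinv0 hAinv_int hB_small i j
      rwa [one_mul] at this
    have hX_int : ∀ i j, ‖X i j‖ ≤ 1 := fun i j => (hX_small i j).trans (le_of_lt hpinv1)
    have hY_int : ∀ i j, ‖Y i j‖ ≤ 1 := by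
      intro i j
      have := qp_matmul_bound C A⁻¹ zero_le_one zero_le_one hC_int hAinv_int i j
      rwa [one_mul] at this
    have hYB_small : ∀ i j, ‖(Y * B) i j‖ ≤ (p:ℝ)⁻¹ := by
      intro i j
      have := qp_matmul_bound Y B zero_le_one hpinv0 hY_int hB_small i j
      rwa [one_mul] at this
    set D' : Matrix {i // ¬P i} {i // ¬P i} ℚ_[p] := D - Y * B with hD'def
    have hD'_int : ∀ i j, ‖D' i j‖ ≤ 1 := by
      intro i j
      rw [hD'def, Matrix.sub_apply]
      exact (qp_norm_sub_le_max _ _).trans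
        (max_le (hD_int i j) ((hYB_small i j).trans (le_of_lt hpinv1)))
    have hD'_small : ∀ i j, b i.1 < b j.1 → ‖D' i j‖ ≤ (p:ℝ)⁻¹ := by
      intro i j hij
      rw [hD'def, Matrix.sub_apply]
      exact (qp_norm_sub_le_max _ _).trans (max_le (hgp _ _ hij) (hYB_small i j))
    -- Schur complement determinant
    have hD'det : ‖D'.det‖ = 1 := by
      haveI := A.invertibleOfIsUnitDet hAunit
      have hschur : (fromBlocks A B C D).det = A.det * D'.det := by
        rw [Matrix.det_fromBlocks₁₁, Matrix.invOf_eq_nonsing_inv, hD'def, hYdef]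
      have : ‖A.det * D'.det‖ = 1 := by rw [← hschur, hdetG]; exact hgdet
      rw [norm_mul, hdetA1, one_mul] at this
      exact this
    -- the smaller block function
    set b' : {i // ¬P i} → Fin r := fun i => Fin.pred (b i.1) i.2 with hb'def
    have hb'lt : ∀ i j, b' i < b' j ↔ b i.1 < b j.1 := fun i j => Fin.pred_lt_pred_iff
    have hb'eq : ∀ i j : {i // ¬P i}, (b' i = b' j ↔ b i.1 = b j.1) := fun i j => Fin.pred_inj
    obtain ⟨u₂, m₂, v₂, hu₂, hm₂, hv₂, hfac₂, huniq₂⟩ :=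
      IH {i // ¬P i} b' D' hD'_int hD'det (fun i j hij => hD'_small i j ((hb'lt i j).mp hij))
    set Us : Matrix ({i // P i} ⊕ {i // ¬P i}) ({i // P i} ⊕ {i // ¬P i}) ℚ_[p] := fromBlocks 1 0 Y u₂ with hUsdef
    set Ms : Matrix ({i // P i} ⊕ {i // ¬P i}) ({i // P i} ⊕ {i // ¬P i}) ℚ_[p] := fromBlocks A 0 0 m₂ with hMsdef
    set Vs : Matrix ({i // P i} ⊕ {i // ¬P i}) ({i // P i} ⊕ {i // ¬P i}) ℚ_[p] := fromBlocks 1 X 0 v₂ with hVsdef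
    have hAX : A * X = B := by rw [hXdef, ← Matrix.mul_assoc, hAA, Matrix.one_mul]
    have hYA : Y * A = C := by rw [hYdef, Matrix.mul_assoc, hAA', Matrix.mul_one]
    have hCX : C * X = Y * B := by rw [hXdef, hYdef, Matrix.mul_assoc]
    have hUMV : Us * Ms * Vs = fromBlocks A B C D := by
      rw [hUsdef, hMsdef, hVsdef, Matrix.fromBlocks_multiply, Matrix.fromBlocks_multiply]
      simp only [Matrix.mul_one, Matrix.one_mul, Matrix.mul_zero, Matrix.zero_mul,
        add_zero, zero_add]
      rw [hAX, hYA, ← hfac₂, hD'def, hCX]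
      rw [add_comm, sub_add_cancel]
    set ubar : Matrix ι ι ℚ_[p] := Us.submatrix e.symm e.symm with hubardef
    set m : Matrix ι ι ℚ_[p] := Ms.submatrix e.symm e.symm with hmdef
    set u : Matrix ι ι ℚ_[p] := Vs.submatrix e.symm e.symm with hudef
    have hfac : g = ubar * m * u := by
      rw [hubardef, hmdef, hudef, Matrix.submatrix_mul_equiv, Matrix.submatrix_mul_equiv,
        hUMV, ← hg]
    have hpos : ∀ (i : ι) (hi : P i), e.symm i = Sum.inl ⟨i, hi⟩ := fun i hi => by
      rw [hedef]; exact Equiv.sumCompl_symm_apply_of_pos (p := P) hi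
    have hneg : ∀ (i : ι) (hi : ¬P i), e.symm i = Sum.inr ⟨i, hi⟩ := fun i hi => by
      rw [hedef]; exact Equiv.sumCompl_symm_apply_of_neg (p := P) hi
    have hLBU : LBU p b ubar := by
      refine ⟨?_, ?_, ?_⟩
      · intro i
        rw [hubardef, Matrix.submatrix_apply]
        by_cases hi : P i
        · rw [hpos i hi, hUsdef, Matrix.fromBlocks_apply₁₁, Matrix.one_apply_eq]
        · rw [hneg i hi, hUsdef, Matrix.fromBlocks_apply₂₂]; exact hu₂.1 _
      · intro i j h
        rw [hubardef, Matrix.submatrix_apply]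
        by_cases hi : P i <;> by_cases hj : P j
        · rw [hpos i hi, hpos j hj, hUsdef, Matrix.fromBlocks_apply₁₁]
          exact Matrix.one_apply_ne (fun hh => h (Or.inl (congrArg Subtype.val hh)))
        · rw [hpos i hi, hneg j hj, hUsdef, Matrix.fromBlocks_apply₁₂, Matrix.zero_apply]
        · exfalso
          have hj' : b j = 0 := hj
          have hi' : b i ≠ 0 := hi
          exact h (Or.inr (by rw [hj']; exact Fin.pos_iff_ne_zero.mpr hi'))
        · rw [hneg i hi, hneg j hj, hUsdef, Matrix.fromBlocks_apply₂₂]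
          refine hu₂.2.1 _ _ ?_
          rintro (hh | hh)
          · exact h (Or.inl (congrArg Subtype.val hh))
          · exact h (Or.inr ((hb'lt _ _).mp hh))
      · intro i j
        rw [hubardef, Matrix.submatrix_apply]
        by_cases hi : P i <;> by_cases hj : P j
        · rw [hpos i hi, hpos j hj, hUsdef, Matrix.fromBlocks_apply₁₁]
          exact qp_one_entry_norm _ _
        · rw [hpos i hi, hneg j hj, hUsdef, Matrix.fromBlocks_apply₁₂]; simp
        · rw [hneg i hi, hpos j hj, hUsdef, Matrix.fromBlocks_apply₂₁]; exact hY_int _ _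
        · rw [hneg i hi, hneg j hj, hUsdef, Matrix.fromBlocks_apply₂₂]; exact hu₂.2.2 _ _
    have hBDG : BDG p b m := by
      refine ⟨?_, ?_, ?_⟩
      · intro i j
        rw [hmdef, Matrix.submatrix_apply]
        by_cases hi : P i <;> by_cases hj : P j
        · rw [hpos i hi, hpos j hj, hMsdef, Matrix.fromBlocks_apply₁₁]; exact hA_int _ _
        · rw [hpos i hi, hneg j hj, hMsdef, Matrix.fromBlocks_apply₁₂]; simp
        · rw [hneg i hi, hpos j hj, hMsdef, Matrix.fromBlocks_apply₂₁]; simp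
        · rw [hneg i hi, hneg j hj, hMsdef, Matrix.fromBlocks_apply₂₂]; exact hm₂.1 _ _
      · have h1 : m.det = Ms.det := by
          rw [hmdef]; exact Matrix.det_submatrix_equiv_self e.symm Ms
        have h2 : Ms.det = A.det * m₂.det := by
          rw [hMsdef]; exact Matrix.det_fromBlocks_zero₁₂ A 0 m₂
        rw [h1, h2, norm_mul, hdetA1, one_mul]; exact hm₂.2.1
      · intro i j hbij
        rw [hmdef, Matrix.submatrix_apply]
        by_cases hi : P i <;> by_cases hj : P j
        · exfalso
          have hi' : b i = 0 := hi
          have hj' : b j = 0 := hj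
          exact hbij (hi'.trans hj'.symm)
        · rw [hpos i hi, hneg j hj, hMsdef, Matrix.fromBlocks_apply₁₂, Matrix.zero_apply]
        · rw [hneg i hi, hpos j hj, hMsdef, Matrix.fromBlocks_apply₂₁, Matrix.zero_apply]
        · rw [hneg i hi, hneg j hj, hMsdef, Matrix.fromBlocks_apply₂₂]
          exact hm₂.2.2 _ _ (fun hh => hbij ((hb'eq _ _).mp hh))
    have hUBU : UBU p b u := by
      refine ⟨?_, ?_, ?_⟩
      · intro i
        rw [hudef, Matrix.submatrix_apply]
        by_cases hi : P i
        · rw [hpos i hi, hVsdef, Matrix.fromBlocks_apply₁₁, Matrix.one_apply_eq]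
        · rw [hneg i hi, hVsdef, Matrix.fromBlocks_apply₂₂]; exact hv₂.1 _
      · intro i j h
        rw [hudef, Matrix.submatrix_apply]
        by_cases hi : P i <;> by_cases hj : P j
        · rw [hpos i hi, hpos j hj, hVsdef, Matrix.fromBlocks_apply₁₁]
          exact Matrix.one_apply_ne (fun hh => h (Or.inl (congrArg Subtype.val hh)))
        · exfalso
          have hi' : b i = 0 := hi
          have hj' : b j ≠ 0 := hj
          exact h (Or.inr (by rw [hi']; exact Fin.pos_iff_ne_zero.mpr hj'))
        · rw [hneg i hi, hpos j hj, hVsdef, Matrix.fromBlocks_apply₂₁, Matrix.zero_apply]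
        · rw [hneg i hi, hneg j hj, hVsdef, Matrix.fromBlocks_apply₂₂]
          refine hv₂.2.1 _ _ ?_
          rintro (hh | hh)
          · exact h (Or.inl (congrArg Subtype.val hh))
          · exact h (Or.inr ((hb'lt _ _).mp hh))
      · intro i j hij
        rw [hudef, Matrix.submatrix_apply]
        by_cases hi : P i <;> by_cases hj : P j
        · exfalso
          have hi' : b i = 0 := hi
          have hj' : b j = 0 := hj
          rw [hi', hj'] at hij
          exact lt_irrefl _ hij
        · rw [hpos i hi, hneg j hj, hVsdef, Matrix.fromBlocks_apply₁₂]; exact hX_small _ _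
        · exfalso
          have hj' : b j = 0 := hj
          rw [hj'] at hij
          exact Fin.not_lt_zero _ hij
        · rw [hneg i hi, hneg j hj, hVsdef, Matrix.fromBlocks_apply₂₂]
          exact hv₂.2.2 _ _ ((hb'lt _ _).mpr hij)
    refine ⟨ubar, m, u, hLBU, hBDG, hUBU, hfac, ?_⟩
    intro ub' m' v' hub' hm' hv' hfac'
    have heinl : ∀ i : {i // P i}, e (Sum.inl i) = i.1 := fun i => by
      rw [hedef]; exact Equiv.sumCompl_apply_inl (p := P) i
    have heinr : ∀ i : {i // ¬P i}, e (Sum.inr i) = i.1 := fun i => by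
      rw [hedef]; exact Equiv.sumCompl_apply_inr (p := P) i
    set U' : Matrix ({i // P i} ⊕ {i // ¬P i}) ({i // P i} ⊕ {i // ¬P i}) ℚ_[p] :=
      ub'.submatrix e e with hU'def
    set M' : Matrix ({i // P i} ⊕ {i // ¬P i}) ({i // P i} ⊕ {i // ¬P i}) ℚ_[p] :=
      m'.submatrix e e with hM'def
    set V' : Matrix ({i // P i} ⊕ {i // ¬P i}) ({i // P i} ⊕ {i // ¬P i}) ℚ_[p] :=
      v'.submatrix e e with hV'def
    set U21 := U'.toBlocks₂₁ with hU21def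
    set U22 := U'.toBlocks₂₂ with hU22def
    set M11 := M'.toBlocks₁₁ with hM11def
    set M22 := M'.toBlocks₂₂ with hM22def
    set V12 := V'.toBlocks₁₂ with hV12def
    set V22 := V'.toBlocks₂₂ with hV22def
    have hU22e : ∀ i j, U22 i j = ub' i.1 j.1 := fun i j => by
      rw [hU22def]
      simp [Matrix.toBlocks₂₂, hU'def, Matrix.submatrix_apply, heinr]
    have hU21e : ∀ i j, U21 i j = ub' i.1 j.1 := fun i j => by
      rw [hU21def]
      simp [Matrix.toBlocks₂₁, hU'def, Matrix.submatrix_apply, heinr, heinl]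
    have hM11e : ∀ i j, M11 i j = m' i.1 j.1 := fun i j => by
      rw [hM11def]
      simp [Matrix.toBlocks₁₁, hM'def, Matrix.submatrix_apply, heinl]
    have hM22e : ∀ i j, M22 i j = m' i.1 j.1 := fun i j => by
      rw [hM22def]
      simp [Matrix.toBlocks₂₂, hM'def, Matrix.submatrix_apply, heinr]
    have hV12e : ∀ i j, V12 i j = v' i.1 j.1 := fun i j => by
      rw [hV12def]
      simp [Matrix.toBlocks₁₂, hV'def, Matrix.submatrix_apply, heinr, heinl]
    have hV22e : ∀ i j, V22 i j = v' i.1 j.1 := fun i j => by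
      rw [hV22def]
      simp [Matrix.toBlocks₂₂, hV'def, Matrix.submatrix_apply, heinr]
    have hU'blocks : U' = fromBlocks 1 0 U21 U22 := by
      ext i j
      rcases i with i | i <;> rcases j with j | j
      · rw [Matrix.fromBlocks_apply₁₁, hU'def, Matrix.submatrix_apply, heinl, heinl]
        rcases eq_or_ne i j with rfl | hne
        · rw [Matrix.one_apply_eq]; exact hub'.1 _
        · rw [Matrix.one_apply_ne hne]
          refine hub'.2.1 _ _ ?_
          rintro (hh | hh)
          · exact hne (Subtype.ext hh)
          · have hi' : b i.1 = 0 := i.2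
            have hj' : b j.1 = 0 := j.2
            rw [hi', hj'] at hh
            exact lt_irrefl _ hh
      · rw [Matrix.fromBlocks_apply₁₂, hU'def, Matrix.submatrix_apply, heinl, heinr,
          Matrix.zero_apply]
        refine hub'.2.1 _ _ ?_
        rintro (hh | hh)
        · exact j.2 (hh ▸ i.2)
        · have hi' : b i.1 = 0 := i.2
          rw [hi'] at hh
          exact Fin.not_lt_zero _ hh
      · rw [Matrix.fromBlocks_apply₂₁, hU21e, hU'def, Matrix.submatrix_apply, heinr, heinl]
      · rw [Matrix.fromBlocks_apply₂₂, hU22e, hU'def, Matrix.submatrix_apply, heinr, heinr]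
    have hM'blocks : M' = fromBlocks M11 0 0 M22 := by
      ext i j
      rcases i with i | i <;> rcases j with j | j
      · rw [Matrix.fromBlocks_apply₁₁, hM11e, hM'def, Matrix.submatrix_apply, heinl, heinl]
      · rw [Matrix.fromBlocks_apply₁₂, hM'def, Matrix.submatrix_apply, heinl, heinr,
          Matrix.zero_apply]
        have hi' : b i.1 = 0 := i.2
        have hj' : b j.1 ≠ 0 := j.2
        exact hm'.2.2 _ _ (fun hh => hj' (hh ▸ hi'))
      · rw [Matrix.fromBlocks_apply₂₁, hM'def, Matrix.submatrix_apply, heinr, heinl,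
          Matrix.zero_apply]
        have hi' : b i.1 ≠ 0 := i.2
        have hj' : b j.1 = 0 := j.2
        exact hm'.2.2 _ _ (fun hh => hi' (hh.symm ▸ hj'))
      · rw [Matrix.fromBlocks_apply₂₂, hM22e, hM'def, Matrix.submatrix_apply, heinr, heinr]
    have hV'blocks : V' = fromBlocks 1 V12 0 V22 := by
      ext i j
      rcases i with i | i <;> rcases j with j | j
      · rw [Matrix.fromBlocks_apply₁₁, hV'def, Matrix.submatrix_apply, heinl, heinl]
        rcases eq_or_ne i j with rfl | hne
        · rw [Matrix.one_apply_eq]; exact hv'.1 _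
        · rw [Matrix.one_apply_ne hne]
          refine hv'.2.1 _ _ ?_
          rintro (hh | hh)
          · exact hne (Subtype.ext hh)
          · have hi' : b i.1 = 0 := i.2
            have hj' : b j.1 = 0 := j.2
            rw [hi', hj'] at hh
            exact lt_irrefl _ hh
      · rw [Matrix.fromBlocks_apply₁₂, hV12e, hV'def, Matrix.submatrix_apply, heinl, heinr]
      · rw [Matrix.fromBlocks_apply₂₁, hV'def, Matrix.submatrix_apply, heinr, heinl,
          Matrix.zero_apply]
        refine hv'.2.1 _ _ ?_
        rintro (hh | hh)
        · exact i.2 (hh.symm ▸ j.2)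
        · have hj' : b j.1 = 0 := j.2
          rw [hj'] at hh
          exact Fin.not_lt_zero _ hh
      · rw [Matrix.fromBlocks_apply₂₂, hV22e, hV'def, Matrix.submatrix_apply, heinr, heinr]
    have hGprod : fromBlocks A B C D
        = fromBlocks M11 (M11 * V12) (U21 * M11) (U21 * M11 * V12 + U22 * M22 * V22) := by
      have step : U' * M' * V' = (ub' * m' * v').submatrix e e := by
        rw [hU'def, hM'def, hV'def, Matrix.submatrix_mul_equiv, Matrix.submatrix_mul_equiv]
      calc fromBlocks A B C D = g.submatrix e e := hGb.symm
        _ = (ub' * m' * v').submatrix e e := by rw [← hfac']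
        _ = U' * M' * V' := step.symm
        _ = fromBlocks M11 (M11 * V12) (U21 * M11) (U21 * M11 * V12 + U22 * M22 * V22) := by
            rw [hU'blocks, hM'blocks, hV'blocks, Matrix.fromBlocks_multiply,
              Matrix.fromBlocks_multiply]
            simp only [Matrix.mul_one, Matrix.one_mul, Matrix.mul_zero, Matrix.zero_mul,
              add_zero, zero_add]
    have e11 : A = M11 := by
      have h := congrArg Matrix.toBlocks₁₁ hGprod
      simpa using h
    have e12 : B = M11 * V12 := by
      have h := congrArg Matrix.toBlocks₁₂ hGprod
      simpa using h
    have e21 : C = U21 * M11 := by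
      have h := congrArg Matrix.toBlocks₂₁ hGprod
      simpa using h
    have e22 : D = U21 * M11 * V12 + U22 * M22 * V22 := by
      have h := congrArg Matrix.toBlocks₂₂ hGprod
      simpa using h
    have eV12 : V12 = X := by
      rw [hXdef]
      calc V12 = (A⁻¹ * A) * V12 := by rw [hAA', Matrix.one_mul]
        _ = A⁻¹ * (A * V12) := by rw [Matrix.mul_assoc]
        _ = A⁻¹ * B := by rw [e11, ← e12]
    have eU21 : U21 = Y := by
      rw [hYdef]
      calc U21 = U21 * (A * A⁻¹) := by rw [hAA, Matrix.mul_one]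
        _ = (U21 * A) * A⁻¹ := by rw [Matrix.mul_assoc]
        _ = C * A⁻¹ := by rw [e11, ← e21]
    have e22' : D' = U22 * M22 * V22 := by
      have h1 : U21 * M11 * V12 = Y * B := by
        rw [eU21, ← e11, eV12, hYA, hCX]
      rw [hD'def, e22, h1, add_sub_cancel_left]
    have hu22 : LBU p b' U22 := by
      refine ⟨fun i => by rw [hU22e]; exact hub'.1 _, ?_, fun i j => by
        rw [hU22e]; exact hub'.2.2 _ _⟩
      intro i j h
      rw [hU22e]
      refine hub'.2.1 _ _ ?_
      rintro (hh | hh)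
      · exact h (Or.inl (Subtype.ext hh))
      · exact h (Or.inr ((hb'lt _ _).mpr hh))
    have hv22 : UBU p b' V22 := by
      refine ⟨fun i => by rw [hV22e]; exact hv'.1 _, ?_, fun i j hij => by
        rw [hV22e]; exact hv'.2.2 _ _ ((hb'lt _ _).mp hij)⟩
      intro i j h
      rw [hV22e]
      refine hv'.2.1 _ _ ?_
      rintro (hh | hh)
      · exact h (Or.inl (Subtype.ext hh))
      · exact h (Or.inr ((hb'lt _ _).mpr hh))
    have hm22 : BDG p b' M22 := by
      refine ⟨fun i j => by rw [hM22e]; exact hm'.1 _ _, ?_, fun i j hbij => by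
        rw [hM22e]; exact hm'.2.2 _ _ (fun hh => hbij ((hb'eq _ _).mpr hh))⟩
      have h1 : m'.det = M'.det := by
        rw [hM'def, Matrix.det_submatrix_equiv_self e m']
      have h2 : M'.det = M11.det * M22.det := by
        rw [hM'blocks]; exact Matrix.det_fromBlocks_zero₁₂ M11 0 M22
      have h3 : ‖M11.det * M22.det‖ = 1 := by
        rw [← h2, ← h1]; exact hm'.2.1
      rw [norm_mul, ← e11, hdetA1, one_mul] at h3
      exact h3
    obtain ⟨q1, q2, q3⟩ := huniq₂ U22 M22 V22 hu22 hm22 hv22 e22'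
    have hback : ∀ N : Matrix ι ι ℚ_[p], (N.submatrix e e).submatrix e.symm e.symm = N :=
      fun N => by
        rw [Matrix.submatrix_submatrix, Equiv.self_comp_symm, Matrix.submatrix_id_id]
    have hU'eq : U' = Us := by rw [hU'blocks, q1, eU21, hUsdef]
    have hM'eq : M' = Ms := by rw [hM'blocks, q2, ← e11, hMsdef]
    have hV'eq : V' = Vs := by rw [hV'blocks, q3, eV12, hVsdef]
    refine ⟨?_, ?_, ?_⟩
    · have h := hback ub'
      rw [← hU'def] at h
      rw [← h, hU'eq, hubardef]
    · have h := hback m'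
      rw [← hM'def] at h
      rw [← h, hM'eq, hmdef]
    · have h := hback v'
      rw [← hV'def] at h
      rw [← h, hV'eq, hudef]



/-- Lower block unipotent matrix with entries in `ℤ_p`: `A i i = 1`, `A i j = 0` unless
`i = j` or `b i > b j`, and all entries integral. -/
def LowerBlockUnipInt (p : ℕ) [Fact p.Prime] {n r : ℕ} (b : Fin n → Fin r)
    (A : Matrix (Fin n) (Fin n) ℚ_[p]) : Prop :=
  (∀ i, A i i = 1) ∧ (∀ i j, ¬(i = j ∨ b j < b i) → A i j = 0) ∧ (∀ i j, ‖A i j‖ ≤ 1)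

/-- Block diagonal element of `GL_n(ℤ_p)`: integral entries, unit determinant,
`A i j = 0` unless `b i = b j`. -/
def BlockDiagGLZ (p : ℕ) [Fact p.Prime] {n r : ℕ} (b : Fin n → Fin r)
    (A : Matrix (Fin n) (Fin n) ℚ_[p]) : Prop :=
  (∀ i j, ‖A i j‖ ≤ 1) ∧ ‖A.det‖ = 1 ∧ (∀ i j, b i ≠ b j → A i j = 0)

/-- Upper block unipotent matrix with above-block entries in `pℤ_p`: `A i i = 1`,
`A i j = 0` unless `i = j` or `b i < b j`, and `A i j ∈ pℤ_p` whenever `b i < b j`. -/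
def UpperBlockUnipP (p : ℕ) [Fact p.Prime] {n r : ℕ} (b : Fin n → Fin r)
    (A : Matrix (Fin n) (Fin n) ℚ_[p]) : Prop :=
  (∀ i, A i i = 1) ∧ (∀ i j, ¬(i = j ∨ b i < b j) → A i j = 0) ∧
    (∀ i j, b i < b j → ‖A i j‖ ≤ (p : ℝ)⁻¹)

/-- Iwahori decomposition of the parahoric subgroup; `GL_n` case of
Lemma 2.16: any `g ∈ GL_n(ℤ_p)` with `g i j ∈ pℤ_p` whenever `b i < b j` factors
uniquely as `g = ū · m · u` with `ū` lower block unipotent integral, `m` block diagonal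
in `GL_n(ℤ_p)` and `u` upper block unipotent with above-block entries in `pℤ_p`. -/
theorem statement2 (p : ℕ) [Fact p.Prime] (n r : ℕ)
    (b : Fin n → Fin r) (hb : Monotone b) (hbs : Function.Surjective b)
    (g : Matrix (Fin n) (Fin n) ℚ_[p])
    (hgint : ∀ i j, ‖g i j‖ ≤ 1) (hgdet : ‖g.det‖ = 1)
    (hgp : ∀ i j, b i < b j → ‖g i j‖ ≤ (p : ℝ)⁻¹) :
    ∃ ubar m u : Matrix (Fin n) (Fin n) ℚ_[p],
      LowerBlockUnipInt p b ubar ∧ BlockDiagGLZ p b m ∧ UpperBlockUnipP p b u ∧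
      g = ubar * m * u ∧
      ∀ ubar' m' u' : Matrix (Fin n) (Fin n) ℚ_[p],
        LowerBlockUnipInt p b ubar' → BlockDiagGLZ p b m' → UpperBlockUnipP p b u' →
        g = ubar' * m' * u' → ubar' = ubar ∧ m' = m ∧ u' = u := by
  obtain ⟨ubar, m, u, h1, h2, h3, h4, h5⟩ :=
    iwahori_aux p r (Fin n) b g hgint hgdet hgp
  exact ⟨ubar, m, u, h1, h2, h3, h4, fun ub' m' u' a1 a2 a3 a4 => h5 ub' m' u' a1 a2 a3 a4⟩
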